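/- Let 𝔛 be a symmetric association scheme on a finite set X with a faithful spherical embedding with respect to E_1 with m_1 = 3, and suppose the relation R_1 is contained in the maximum inner product relation Γ_α. Then the graph (X, Γ_α) is regular of valency at most 5; consequently the valency k_1 of R_1 satisfies k_1 ∈ {1, 2, 3, 4, 5}. -/

import Mathlib

open scoped RealInnerProductSpace
open Real

lemma angle_lemma (β : ℝ) (hβ : β < 1/2) (θ : Fin 6 → ℝ)
    (hmem : ∀ i, θ i ∈ Set.Ioc (-π) π)
    (h : ∀ i j : Fin 6, i ≠ j → Real.cos (θ i - θ j) ≤ β) : False := by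
  have hβ1 : (-1 : ℝ) ≤ β := le_trans (Real.neg_one_le_cos _) (h 0 1 (by decide))
  set c := Real.arccos β with hc
  have hcβ : Real.cos c = β := Real.cos_arccos hβ1 (by linarith)
  have hcπ : c ≤ π := Real.arccos_le_pi β
  have hc3 : π/3 < c := by
    by_contra hle
    push_neg at hle
    have h2 : Real.cos (π/3) ≤ Real.cos c :=
      Real.cos_le_cos_of_nonneg_of_le_pi (Real.arccos_nonneg β) (by linarith [Real.pi_pos]) hle
    rw [Real.cos_pi_div_three] at h2
    linarith
  have key : ∀ i j : Fin 6, i ≠ j → c ≤ |θ i - θ j| ∧ |θ i - θ j| ≤ 2*π - c := by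
    intro i j hij
    have hi := hmem i; have hj := hmem j
    have hD2 : |θ i - θ j| < 2*π := by
      rw [abs_lt]; constructor <;> [linarith [hi.1, hj.2]; linarith [hi.2, hj.1]]
    have hD0 : 0 ≤ |θ i - θ j| := abs_nonneg _
    have hcos : Real.cos |θ i - θ j| ≤ β := by rw [Real.cos_abs]; exact h i j hij
    constructor
    · by_contra hlt
      push_neg at hlt
      have := Real.cos_lt_cos_of_nonneg_of_le_pi hD0 hcπ hlt
      rw [hcβ] at this; linarith
    · by_contra hlt
      push_neg at hlt
      have h0' : 0 ≤ 2*π - |θ i - θ j| := by linarith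
      have hlt' : 2*π - |θ i - θ j| < c := by linarith
      have := Real.cos_lt_cos_of_nonneg_of_le_pi h0' hcπ hlt'
      rw [hcβ] at this
      rw [show (2*π - |θ i - θ j|) = -(|θ i - θ j|) + 2*π by ring, Real.cos_add_two_pi,
        Real.cos_neg] at this
      linarith
  set σ := Tuple.sort θ with hσ
  have hmono : Monotone (θ ∘ σ) := Tuple.monotone_sort θ
  set g : Fin 6 → ℝ := θ ∘ σ with hg
  have step : ∀ i j : Fin 6, i < j → c ≤ g j - g i := by
    intro i j hij
    have h1 := (key (σ i) (σ j) (fun hh => (ne_of_lt hij) (σ.injective hh))).1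
    have h2 : θ (σ i) ≤ θ (σ j) := hmono (le_of_lt hij)
    rw [abs_sub_comm, abs_of_nonneg (by linarith)] at h1
    exact h1
  have upper : g 5 - g 0 ≤ 2*π - c := by
    have h1 := (key (σ 0) (σ 5) (fun hh => (by decide : (0:Fin 6) ≠ 5) (σ.injective hh))).2
    have h2 : θ (σ 0) ≤ θ (σ 5) := hmono (by decide)
    rw [abs_sub_comm, abs_of_nonneg (by linarith)] at h1
    exact h1
  have s1 := step 0 1 (by decide)
  have s2 := step 1 2 (by decide)
  have s3 := step 2 3 (by decide)
  have s4 := step 3 4 (by decide)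
  have s5 := step 4 5 (by decide)
  linarith


lemma twoD {W : Type*} [NormedAddCommGroup W] [InnerProductSpace ℝ W] [FiniteDimensional ℝ W]
    (hW : Module.finrank ℝ W ≤ 2) (β : ℝ) (hβ : β < 1/2) (u : Fin 6 → W)
    (hu : ∀ i, ⟪u i, u i⟫ = 1) (huu : ∀ i j : Fin 6, i ≠ j → ⟪u i, u j⟫ ≤ β) : False := by
  obtain ⟨n, hn⟩ : ∃ n, Module.finrank ℝ W = n := ⟨_, rfl⟩
  obtain ⟨b⟩ : Nonempty (OrthonormalBasis (Fin n) ℝ W) :=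
    ⟨(stdOrthonormalBasis ℝ W).reindex (finCongr hn)⟩
  have hrepr : ∀ x y : W, ⟪x, y⟫ = ∑ k, b.repr x k * b.repr y k := by
    intro x y
    rw [← b.repr.inner_map_map x y, PiLp.inner_apply]
    simp [RCLike.inner_apply, conj_trivial]
    exact Finset.sum_congr rfl fun _ _ => mul_comm _ _
  rw [hn] at hW
  interval_cases n
  · have h0 := hu 0
    rw [hrepr] at h0
    simp at h0
  · set a : Fin 6 → ℝ := fun i => b.repr (u i) 0 with ha
    have hsq : ∀ i, a i * a i = 1 := by
      intro i
      have := hu i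
      rw [hrepr] at this
      simpa [Fin.sum_univ_one] using this
    have hprod : ∀ i j : Fin 6, i ≠ j → a i * a j ≤ β := by
      intro i j hij
      have := huu i j hij
      rw [hrepr] at this
      simpa [Fin.sum_univ_one] using this
    have hneg : ∀ i j : Fin 6, i ≠ j → a i * a j = -1 := by
      intro i j hij
      rcases mul_self_eq_one_iff.1 (show (a i * a j) * (a i * a j) = 1 by
        have := hsq i; have := hsq j; nlinarith) with h1 | h1
      · exfalso; have := hprod i j hij; rw [h1] at this; linarith
      · exact h1
    have e1 := hneg 0 1 (by decide)
    have e2 := hneg 0 2 (by decide)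
    have e3 := hneg 1 2 (by decide)
    have hnn := sq_nonneg (a 0 * a 1 * a 2)
    have hx : (a 0 * a 1) * ((a 0 * a 2) * (a 1 * a 2)) = (a 0 * a 1 * a 2)^2 := by ring
    rw [e1, e2, e3] at hx
    norm_num at hx
    nlinarith [sq_nonneg (a 2)]
  · set a : Fin 6 → ℝ := fun i => b.repr (u i) 0 with ha
    set e : Fin 6 → ℝ := fun i => b.repr (u i) 1 with he
    have hsq : ∀ i, a i * a i + e i * e i = 1 := by
      intro i
      have := hu i
      rw [hrepr] at this
      simpa [Fin.sum_univ_two] using this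
    have hprod : ∀ i j : Fin 6, i ≠ j → a i * a j + e i * e j ≤ β := by
      intro i j hij
      have := huu i j hij
      rw [hrepr] at this
      simpa [Fin.sum_univ_two] using this
    set z : Fin 6 → ℂ := fun i => ⟨a i, e i⟩ with hz
    have hzabs : ∀ i, ‖z i‖ = 1 := by
      intro i
      rw [Complex.norm_def, Complex.normSq_mk]
      rw [hsq i]
      exact Real.sqrt_one
    have hzne : ∀ i, z i ≠ 0 := by
      intro i hi
      have := hzabs i
      rw [hi] at this; simp at this
    set θ : Fin 6 → ℝ := fun i => Complex.arg (z i) with hθ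
    have hcos : ∀ i, Real.cos (θ i) = a i := by
      intro i
      rw [hθ]
      simp only []
      rw [Complex.cos_arg (hzne i), hzabs i]
      simp [hz]
    have hsin : ∀ i, Real.sin (θ i) = e i := by
      intro i
      rw [hθ]
      simp only []
      rw [Complex.sin_arg, hzabs i]
      simp [hz]
    refine angle_lemma β hβ θ (fun i => Complex.arg_mem_Ioc (z i)) ?_
    intro i j hij
    rw [Real.cos_sub, hcos, hcos, hsin, hsin]
    exact hprod i j hij


lemma six_points {W : Type*} [NormedAddCommGroup W] [InnerProductSpace ℝ W]
    [FiniteDimensional ℝ W]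
    (V : Submodule ℝ W) (hV : Module.finrank ℝ V ≤ 3) (ρ α : ℝ) (hρ : 0 < ρ) (hαρ : α < ρ)
    (x : W) (y : Fin 6 → W) (hxV : x ∈ V) (hyV : ∀ i, y i ∈ V)
    (hxn : ⟪x, x⟫ = ρ) (hyn : ∀ i, ⟪y i, y i⟫ = ρ)
    (hinj : Function.Injective y)
    (hxy : ∀ i, ⟪x, y i⟫ = α) (hyy : ∀ i j : Fin 6, i ≠ j → ⟪y i, y j⟫ ≤ α) : False := by
  have hlb : -ρ ≤ α := by
    have h0 : (0:ℝ) ≤ ⟪x + y 0, x + y 0⟫ := real_inner_self_nonneg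
    rw [real_inner_add_add_self, hxn, hxy 0, hyn 0] at h0
    linarith
  rcases eq_or_lt_of_le hlb with heq | hlt
  · -- α = -ρ : all y i = -x
    have hyx : ∀ i, y i = -x := by
      intro i
      have h0 : ⟪x + y i, x + y i⟫ = 0 := by
        rw [real_inner_add_add_self, hxn, hxy i, hyn i, ← heq]; ring
      exact eq_neg_of_add_eq_zero_right (inner_self_eq_zero.1 h0)
    exact absurd (hinj ((hyx 0).trans (hyx 1).symm)) (by decide)
  · have hsq : α^2 < ρ^2 := by nlinarith
    set t : ℝ := ρ * (ρ^2 - α^2) with ht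
    have htpos : 0 < t := by nlinarith
    have hyx' : ∀ i, ⟪y i, x⟫ = α := fun i => (real_inner_comm x (y i)).trans (hxy i)
    set w : Fin 6 → W := fun i => ρ • y i - α • x with hw
    have hwx : ∀ i, ⟪x, w i⟫ = 0 := by
      intro i
      simp only [hw, inner_sub_right, real_inner_smul_right, hxy i, hxn]
      ring
    have hww : ∀ i, ⟪w i, w i⟫ = t := by
      intro i
      simp only [hw, inner_sub_left, inner_sub_right, real_inner_smul_left,
        real_inner_smul_right, hxn, hyn i, hxy i, hyx' i, ht]
      ring
    have hwwij : ∀ i j : Fin 6, i ≠ j → ⟪w i, w j⟫ ≤ ρ * α * (ρ - α) := by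
      intro i j hij
      have h1 := hyy i j hij
      simp only [hw, inner_sub_left, inner_sub_right, real_inner_smul_left,
        real_inner_smul_right, hxn, hxy i, hxy j, hyx' i]
      nlinarith
    set β : ℝ := α / (ρ + α) with hβ'
    have hρα : 0 < ρ + α := by linarith
    have hβlt : β < 1/2 := by
      rw [hβ', div_lt_iff₀ hρα]
      linarith
    set u : Fin 6 → W := fun i => (Real.sqrt t)⁻¹ • w i with hu'
    have hst : Real.sqrt t * Real.sqrt t = t := Real.mul_self_sqrt htpos.le
    have hstpos : 0 < Real.sqrt t := Real.sqrt_pos.2 htpos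
    have huu : ∀ i, ⟪u i, u i⟫ = 1 := by
      intro i
      simp only [hu', real_inner_smul_left, real_inner_smul_right, hww i]
      field_simp
      rw [sq, hst]
    have huuij : ∀ i j : Fin 6, i ≠ j → ⟪u i, u j⟫ ≤ β := by
      intro i j hij
      have h1 := hwwij i j hij
      have h2 : ⟪u i, u j⟫ = ⟪w i, w j⟫ / t := by
        simp only [hu', real_inner_smul_left, real_inner_smul_right]
        rw [← hst]
        field_simp
        rw [Real.sqrt_sq hstpos.le]
      rw [h2, hβ']
      rw [div_le_div_iff₀ htpos hρα]
      nlinarith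
    -- the subspace K
    set K : Submodule ℝ W := V ⊓ (Submodule.span ℝ {x})ᗮ with hK
    have hxne : x ≠ 0 := by
      intro h
      rw [h, inner_zero_left] at hxn
      linarith
    have huK : ∀ i, u i ∈ K := by
      intro i
      refine Submodule.mem_inf.2 ⟨?_, ?_⟩
      · exact Submodule.smul_mem _ _ (Submodule.sub_mem _
          (Submodule.smul_mem _ _ (hyV i)) (Submodule.smul_mem _ _ hxV))
      · rw [Submodule.mem_orthogonal]
        intro v hv
        obtain ⟨a, rfl⟩ := Submodule.mem_span_singleton.1 hv
        rw [real_inner_smul_left]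
        simp only [hu', real_inner_smul_right, hwx i]
        ring
    have hKrank : Module.finrank ℝ K ≤ 2 := by
      have hA1 : Module.finrank ℝ (Submodule.span ℝ {x}) = 1 := finrank_span_singleton hxne
      have hdisj : Submodule.span ℝ {x} ⊓ K = ⊥ := by
        rw [hK, eq_bot_iff]
        intro v hv
        have h1 : v ∈ Submodule.span ℝ {x} ⊓ (Submodule.span ℝ {x})ᗮ :=
          ⟨hv.1, hv.2.2⟩
        rw [Submodule.inf_orthogonal_eq_bot] at h1
        exact h1
      have hsup : Submodule.span ℝ {x} ⊔ K ≤ V := by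
        refine sup_le ?_ inf_le_left
        rw [Submodule.span_le, Set.singleton_subset_iff]
        exact hxV
      have h1 := Submodule.finrank_sup_add_finrank_inf_eq (Submodule.span ℝ {x}) K
      rw [hdisj, hA1] at h1
      have h2 : Module.finrank ℝ ↥(Submodule.span ℝ {x} ⊔ K) ≤ Module.finrank ℝ V :=
        Submodule.finrank_mono hsup
      simp only [finrank_bot] at h1
      omega
    -- move to K
    exact twoD hKrank β hβlt (fun i => ⟨u i, huK i⟩) (fun i => huu i)
      (fun i j hij => huuij i j hij)



/-- A symmetric association scheme of class `d` on a finite set `X`: a partition of `X × X`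
into nonempty relations `R 0, …, R d` with `R 0` the diagonal, each `R i` symmetric, and
well-defined intersection numbers `p^k_{ij}`. -/
structure AssocScheme (X : Type*) [Fintype X] [DecidableEq X] (d : ℕ) where
  R : Fin (d + 1) → X → X → Prop
  R_zero : ∀ x y : X, R 0 x y ↔ x = y
  R_symm : ∀ (i : Fin (d + 1)) (x y : X), R i x y → R i y x
  R_partition : ∀ x y : X, ∃! i : Fin (d + 1), R i x y
  R_nonempty : ∀ i : Fin (d + 1), ∃ x y : X, R i x y
  pnum : ∀ i j k : Fin (d + 1), ∃ p : ℕ, ∀ x y : X, R k x y →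
    Set.ncard {z : X | R i x z ∧ R j z y} = p

variable {X : Type*} [Fintype X] [DecidableEq X] {d : ℕ}

open Classical in
/-- The adjacency matrix of the `i`-th relation of the scheme. -/
noncomputable def AssocScheme.adj (S : AssocScheme X d) (i : Fin (d + 1)) : Matrix X X ℝ :=
  Matrix.of fun x y => if S.R i x y then (1 : ℝ) else 0

/-- Membership in the Bose–Mesner algebra (the real span of the adjacency matrices). -/
def AssocScheme.inBM (S : AssocScheme X d) (M : Matrix X X ℝ) : Prop :=
  ∃ c : Fin (d + 1) → ℝ, M = ∑ i : Fin (d + 1), c i • S.adj i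

/-- The spherical embedding with respect to an idempotent `E`:
`x ↦ √(|X| / rank E) • (E φₓ)`, viewed as a point of the Euclidean space `ℝ^X`
(`φₓ` is the characteristic column vector of `x`, so `E φₓ` is the `x`-th column of `E`). -/
noncomputable def sphEmb (E : Matrix X X ℝ) (x : X) : EuclideanSpace ℝ X :=
  (WithLp.equiv 2 (X → ℝ)).symm
    fun y => Real.sqrt ((Fintype.card X : ℝ) / (E.rank : ℝ)) * E y x

/-- If a symmetric association scheme has a faithful spherical embedding with respect to a
primitive idempotent `E₁` with `m₁ = 3` and `R₁ ⊆ Γ_α` (the maximum inner product relation),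
then the graph `(X, Γ_α)` is regular of valency at most `5`; consequently the valency `k₁`
of `R₁` satisfies `1 ≤ k₁ ≤ 5`. -/

theorem stmt_1 (S : AssocScheme X d) (E : Matrix X X ℝ)
    (hBM : S.inBM E) (hIdem : E * E = E)
    (hPrim : ∀ F : Matrix X X ℝ, S.inBM F → F * F = F → E * F = F → F = 0 ∨ F = E)
    (hRank : E.rank = 3)
    (hFaithful : Function.Injective (sphEmb E))
    (α : ℝ)
    (hα : IsGreatest {r : ℝ | ∃ x y : X, x ≠ y ∧ ⟪(sphEmb E x), (sphEmb E y)⟫ = r} α)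
    (hsub : ∀ x y : X, S.R 1 x y → x ≠ y ∧ ⟪(sphEmb E x), (sphEmb E y)⟫ = α)
    (k₁ : ℕ) (hk : ∀ x : X, Set.ncard {y : X | S.R 1 x y} = k₁) :
    (∃ k : ℕ, k ≤ 5 ∧
        ∀ x : X, Set.ncard {y : X | x ≠ y ∧ ⟪(sphEmb E x), (sphEmb E y)⟫ = α} = k) ∧
      1 ≤ k₁ ∧ k₁ ≤ 5 := by
  classical
  obtain ⟨c, hc⟩ := hBM
  set v := sphEmb E with hv
  obtain ⟨x0, y00, hx0y0⟩ := S.R_nonempty 0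
  have hXne : Nonempty X := ⟨x0⟩
  have hncard : (0:ℝ) < Fintype.card X := by exact_mod_cast Fintype.card_pos
  set κ : ℝ := (Fintype.card X : ℝ) / (E.rank : ℝ) with hκ
  have hκpos : 0 < κ := by rw [hκ, hRank]; positivity
  have huniq : ∀ (i j : Fin (d+1)) (x y : X), S.R i x y → S.R j x y → i = j := by
    intro i j x y hi hj
    obtain ⟨k, -, hk'⟩ := S.R_partition x y
    rw [hk' i hi, hk' j hj]
  have hEentry : ∀ (i : Fin (d+1)) (a b : X), S.R i a b → E a b = c i := by
    intro i a b hab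
    rw [hc]
    simp only [Matrix.sum_apply, Matrix.smul_apply, AssocScheme.adj, Matrix.of_apply,
      smul_eq_mul]
    rw [Finset.sum_eq_single i]
    · rw [if_pos hab, mul_one]
    · intro j _ hji
      rw [if_neg, mul_zero]
      intro hj
      exact hji (huniq j i a b hj hab)
    · simp
  have hEsymm : ∀ a b : X, E a b = E b a := by
    intro a b
    obtain ⟨i, hi, -⟩ := S.R_partition a b
    rw [hEentry i a b hi, hEentry i b a (S.R_symm i a b hi)]
  have hEdiag : ∀ a : X, E a a = c 0 := fun a => hEentry 0 a a ((S.R_zero a a).2 rfl)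
  have hinner : ∀ a b : X, ⟪v a, v b⟫ = κ * E a b := by
    intro a b
    have h0 : ⟪v a, v b⟫ = ∑ z, (Real.sqrt κ * E z a) * (Real.sqrt κ * E z b) := by
      rw [hv]
      simp only [sphEmb, PiLp.inner_apply, WithLp.equiv_symm_apply, WithLp.ofLp_toLp, RCLike.inner_apply,
        conj_trivial, hκ]
      exact Finset.sum_congr rfl fun _ _ => mul_comm _ _
    rw [h0, Finset.sum_congr rfl (fun z _ => show (Real.sqrt κ * E z a) * (Real.sqrt κ * E z b)
        = κ * (E a z * E z b) from by
      rw [hEsymm z a, show (Real.sqrt κ * E a z) * (Real.sqrt κ * E z b)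
        = (Real.sqrt κ * Real.sqrt κ) * (E a z * E z b) from by ring,
        Real.mul_self_sqrt hκpos.le]), ← Finset.mul_sum]
    rw [show ∑ z, E a z * E z b = (E * E) a b from (Matrix.mul_apply).symm, hIdem]
  have hEne : E ≠ 0 := by
    intro h
    rw [h] at hRank
    simp [Matrix.rank_zero] at hRank
  have hc0 : 0 < c 0 := by
    by_contra hle
    push_neg at hle
    have hdiagsum : ∑ a : X, E a a = (Fintype.card X : ℝ) * c 0 := by
      rw [Finset.sum_congr rfl (fun a _ => hEdiag a)]
      simp [Finset.card_univ, mul_comm]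
    have hsq : ∀ a : X, E a a = ∑ z, (E a z)^2 := by
      intro a
      conv_lhs => rw [← hIdem]
      rw [Matrix.mul_apply]
      exact Finset.sum_congr rfl fun z _ => by rw [hEsymm z a]; ring
    obtain ⟨a, z, haz⟩ : ∃ a z : X, E a z ≠ 0 := by
      by_contra hno
      push_neg at hno
      exact hEne (Matrix.ext fun a z => by rw [hno a z, Matrix.zero_apply])
    have hpos : 0 < ∑ a : X, E a a := by
      rw [Finset.sum_congr rfl fun a _ => hsq a]
      exact Finset.sum_pos' (fun a _ => Finset.sum_nonneg fun z _ => sq_nonneg _)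
        ⟨a, Finset.mem_univ a, Finset.sum_pos' (fun z _ => sq_nonneg _)
          ⟨z, Finset.mem_univ z, pow_two_pos_of_ne_zero haz⟩⟩
    rw [hdiagsum] at hpos
    nlinarith
  set ρ : ℝ := κ * c 0 with hρ'
  have hρpos : 0 < ρ := mul_pos hκpos hc0
  have hρeq : ∀ a : X, ⟪v a, v a⟫ = ρ := by
    intro a
    rw [hinner a a, hEdiag a]
  obtain ⟨a₀, b₀, hab₀, hips⟩ := hα.1
  have hαρ : α < ρ := by
    have hcs := real_inner_mul_inner_self_le (v a₀) (v b₀)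
    rw [hips, hρeq, hρeq] at hcs
    have hαle : α ≤ ρ := by nlinarith
    rcases eq_or_lt_of_le hαle with h | h
    · exfalso
      have h0 : ⟪v a₀ - v b₀, v a₀ - v b₀⟫ = 0 := by
        rw [real_inner_sub_sub_self, hρeq, hρeq, hips, ← h]
        ring
      exact hab₀ (hFaithful (sub_eq_zero.1 (inner_self_eq_zero.1 h0)))
    · exact h
  set V : Submodule ℝ (EuclideanSpace ℝ X) := Submodule.span ℝ (Set.range v) with hV
  have hVle : Module.finrank ℝ V ≤ 3 := by
    have hsub2 : Set.range v ⊆ ((LinearMap.range E.mulVecLin).map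
        (WithLp.linearEquiv 2 ℝ (X → ℝ)).symm.toLinearMap : Set (EuclideanSpace ℝ X)) := by
      rintro _ ⟨a, rfl⟩
      refine ⟨E.mulVec (Real.sqrt κ • (Pi.single a (1:ℝ) : X → ℝ)), ⟨_, Matrix.mulVecLin_apply E _⟩, ?_⟩
      rw [hv]
      refine (WithLp.ext_iff 2).2 (funext fun z => ?_)
      show E.mulVec (Real.sqrt κ • (Pi.single a (1:ℝ) : X → ℝ)) z
        = Real.sqrt ((Fintype.card X : ℝ)/(E.rank:ℝ)) * E z a
      simp only [Matrix.mulVec, dotProduct, Pi.smul_apply, Pi.single_apply,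
        smul_eq_mul, mul_ite, mul_one, mul_zero, Finset.sum_ite_eq', Finset.mem_univ,
        if_true]
      rw [hκ, mul_comm]
    have hspan : V ≤ (LinearMap.range E.mulVecLin).map
        (WithLp.linearEquiv 2 ℝ (X → ℝ)).symm.toLinearMap := Submodule.span_le.2 hsub2
    have hfin := Submodule.finrank_mono hspan
    rw [LinearEquiv.finrank_map_eq] at hfin
    rw [← hRank]
    exact hfin
  have pfun : ∀ i : Fin (d+1), ∃ q : ℕ, ∀ x : X, {y | S.R i x y}.ncard = q := by
    intro i
    obtain ⟨q, hq⟩ := S.pnum i i 0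
    refine ⟨q, fun x => ?_⟩
    rw [← hq x x ((S.R_zero x x).2 rfl)]
    congr 1
    ext z
    simp only [Set.mem_setOf_eq]
    exact ⟨fun h2 => ⟨h2, S.R_symm i x z h2⟩, fun h2 => h2.1⟩
  choose p hp using pfun
  have hdeg : ∀ x : X, (Finset.univ.filter fun y => x ≠ y ∧ ⟪v x, v y⟫ = α).card ≤ 5 := by
    intro x
    by_contra hgt
    push_neg at hgt
    obtain ⟨t, hts, htcard⟩ := Finset.exists_subset_card_eq hgt
    have htX : Fintype.card ↥t = 6 := by rw [Fintype.card_coe]; exact htcard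
    let e := Fintype.equivFinOfCardEq htX
    set yy : Fin 6 → X := fun i => (e.symm i : X) with hyy
    have hyinj : Function.Injective yy := fun i j h => e.symm.injective (Subtype.ext h)
    have hymem : ∀ i, yy i ∈ t := fun i => (e.symm i).2
    have hyprop : ∀ i, x ≠ yy i ∧ ⟪v x, v (yy i)⟫ = α := by
      intro i
      have := hts (hymem i)
      simpa using (Finset.mem_filter.1 this).2
    exact six_points V hVle ρ α hρpos hαρ (v x) (v ∘ yy)
      (Submodule.subset_span ⟨x, rfl⟩) (fun i => Submodule.subset_span ⟨yy i, rfl⟩)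
      (hρeq x) (fun i => hρeq (yy i))
      (hFaithful.comp hyinj)
      (fun i => (hyprop i).2)
      (fun i j hij => hα.2 ⟨yy i, yy j, fun h => hij (hyinj h), rfl⟩)
  set T : Finset (Fin (d+1)) := Finset.univ.filter (fun i => i ≠ 0 ∧ κ * c i = α) with hT
  have hNfin : ∀ x : X, (Finset.univ.filter fun y => x ≠ y ∧ ⟪v x, v y⟫ = α)
      = T.biUnion fun i => Finset.univ.filter fun y => S.R i x y := by
    intro x
    ext y
    simp only [Finset.mem_filter, Finset.mem_univ, true_and, Finset.mem_biUnion, hT]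
    constructor
    · rintro ⟨hxy, hip⟩
      obtain ⟨i, hi, -⟩ := S.R_partition x y
      refine ⟨i, ?_, hi⟩
      try simp only [Finset.mem_filter, Finset.mem_univ, true_and]
      constructor
      · intro h0
        exact hxy ((S.R_zero x y).1 (h0 ▸ hi))
      · rw [hinner, hEentry i x y hi] at hip
        exact hip
    · rintro ⟨i, hiT, hi⟩
      try simp only [Finset.mem_filter, Finset.mem_univ, true_and] at hiT
      refine ⟨?_, ?_⟩
      · intro hxy
        subst hxy
        exact hiT.1 (huniq i 0 x x hi ((S.R_zero x x).2 rfl))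
      · rw [hinner, hEentry i x y hi]
        exact hiT.2
  have hcard : ∀ x : X, (Finset.univ.filter fun y => x ≠ y ∧ ⟪v x, v y⟫ = α).card
      = ∑ i ∈ T, p i := by
    intro x
    rw [hNfin x, Finset.card_biUnion]
    · refine Finset.sum_congr rfl fun i _ => ?_
      have hset : {y | S.R i x y} = ↑(Finset.univ.filter fun y => S.R i x y) := by
        ext z; simp
      rw [← hp i x, hset, Set.ncard_coe_finset]
    · intro i hi j hj hij
      rw [Function.onFun, Finset.disjoint_left]
      intro z hzi hzj
      simp only [Finset.mem_filter, Finset.mem_univ, true_and] at hzi hzj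
      exact hij (huniq i j x z hzi hzj)
  have hsetfin : ∀ x : X, {y : X | x ≠ y ∧ ⟪v x, v y⟫ = α}
      = ↑(Finset.univ.filter fun y => x ≠ y ∧ ⟪v x, v y⟫ = α) := by
    intro x
    ext z
    simp
  refine ⟨⟨∑ i ∈ T, p i, ?_, ?_⟩, ?_, ?_⟩
  · rw [← hcard x0]
    exact hdeg x0
  · intro x
    rw [hsetfin x, Set.ncard_coe_finset, hcard x]
  · obtain ⟨a, b, hab⟩ := S.R_nonempty 1
    rw [← hk a]
    exact (Set.ncard_pos (Set.toFinite _)).2 ⟨b, hab⟩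
  · rw [← hk x0]
    calc {y | S.R 1 x0 y}.ncard
        ≤ (Finset.univ.filter fun y => x0 ≠ y ∧ ⟪v x0, v y⟫ = α).card := by
          rw [← Set.ncard_coe_finset]
          refine Set.ncard_le_ncard ?_ (Finset.univ.filter _).finite_toSet
          intro z hz
          simp only [Finset.coe_filter, Set.mem_setOf_eq, Finset.mem_univ, true_and]
          exact hsub x0 z hz
      _ ≤ 5 := hdeg x0
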